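/- Let n = 2^m, k = 2^h with h ≤ m, and i₁ < … < i_h ∈ [m]. The function f = f^↓ ∘ F_{i_h} ∘ … ∘ F_{i_1} contains no increasing subsequence of length k+1. -/

import Mathlib

private lemma foldl_xor_eq (L : List ℕ) (x : ℕ) :
    L.foldl (fun a i => a ^^^ 2 ^ i) x = x ^^^ L.foldl (fun a i => a ^^^ 2 ^ i) 0 := by
  induction L generalizing x with
  | nil => simp
  | cons i L ih =>
    simp only [List.foldl_cons]
    rw [ih (x ^^^ 2 ^ i), ih (0 ^^^ 2 ^ i)]
    simp [Nat.xor_assoc]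

private lemma foldl_xor_testBit (L : List ℕ) (hL : L.Nodup) (x b : ℕ) :
    (L.foldl (fun a i => a ^^^ 2 ^ i) x).testBit b = ((x.testBit b).xor (decide (b ∈ L))) := by
  induction L generalizing x with
  | nil => simp
  | cons i L ih =>
    simp only [List.foldl_cons]
    rw [ih hL.of_cons]
    rw [Nat.testBit_xor, Nat.testBit_two_pow]
    by_cases hbi : i = b
    · subst hbi
      have : i ∉ L := (List.nodup_cons.1 hL).1
      simp [this]
    · simp [hbi, Ne.symm hbi]

private lemma sum_two_pow (n : ℕ) : ∑ j ∈ Finset.range n, 2 ^ j = 2 ^ n - 1 := by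
  induction n with
  | zero => simp
  | succ n ih =>
    rw [Finset.sum_range_succ, ih]
    have : 0 < 2 ^ n := Nat.pow_pos (by norm_num)
    rw [pow_succ]
    omega

/-- The function `f = f^↓ ∘ F_{i_h} ∘ … ∘ F_{i_1}` on `{0,…,2^m-1}` contains no increasing
subsequence of length `2^h + 1`. -/
theorem stmt9 (m h : ℕ) (hh : h ≤ m) (ι : ℕ → ℕ)
    (hmono : ∀ a b, a < b → b < h → ι a < ι b)
    (hlt : ∀ j < h, ι j < m) :
    ¬ ∃ s : Fin (2 ^ h + 1) → ℕ,
      (∀ j, s j < 2 ^ m) ∧ StrictMono s ∧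
      StrictMono (fun j =>
        2 ^ m - 1 - ((List.range h).map ι).foldl (fun a i => a ^^^ 2 ^ i) (s j)) := by
  rintro ⟨s, hbound, hs, hf⟩
  set L : List ℕ := (List.range h).map ι with hLdef
  set c : ℕ := L.foldl (fun a i => a ^^^ 2 ^ i) 0 with hcdef
  -- nodup
  have hLnd : L.Nodup := by
    refine List.Nodup.map_on ?_ (List.nodup_range (n := h))
    intro a ha b hb hab
    simp only [List.mem_range] at ha hb
    rcases lt_trichotomy a b with hlt' | rfl | hlt'
    · exact absurd hab (Nat.ne_of_lt (hmono a b hlt' hb))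
    · rfl
    · exact absurd hab.symm (Nat.ne_of_lt (hmono b a hlt' ha))
  have hmemL : ∀ b, b ∈ L ↔ ∃ j < h, ι j = b := by
    intro b; simp [hLdef, List.mem_map, List.mem_range]
  have hcbit : ∀ b, c.testBit b = decide (∃ j < h, ι j = b) := by
    intro b
    rw [hcdef, foldl_xor_testBit L hLnd]
    simp [hmemL b]
  -- u j = s j ^^^ c
  have hfold : ∀ x : ℕ, L.foldl (fun a i => a ^^^ 2 ^ i) x = x ^^^ c := fun x =>
    foldl_xor_eq L x
  have hubound : ∀ j, s j ^^^ c < 2 ^ m := by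
    intro j
    by_contra hge
    obtain ⟨i, him, hbit⟩ := Nat.exists_ge_and_testBit_of_ge_two_pow (Nat.le_of_not_lt hge)
    rw [Nat.testBit_xor] at hbit
    have h1 : (s j).testBit i = false :=
      Nat.testBit_lt_two_pow (lt_of_lt_of_le (hbound j) (Nat.pow_le_pow_right (by norm_num) him))
    have h2 : c.testBit i = false := by
      rw [hcbit]
      simp only [decide_eq_false_iff_not]
      rintro ⟨j', hj', rfl⟩
      have := hlt j' hj'
      omega
    rw [h1, h2] at hbit
    simp at hbit
  have hanti : ∀ a b : Fin (2 ^ h + 1), a < b → s b ^^^ c < s a ^^^ c := by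
    intro a b hab
    have := hf hab
    simp only [hfold] at this
    have ha := hubound a
    have hb := hubound b
    omega
  -- compression
  set g : ℕ → ℕ := fun z => ∑ j ∈ Finset.range h, if z.testBit (ι j) then 2 ^ j else 0
    with hgdef
  have hgbound : ∀ z, g z < 2 ^ h := by
    intro z
    have h1 : g z ≤ ∑ j ∈ Finset.range h, 2 ^ j := by
      apply Finset.sum_le_sum
      intro j _
      split <;> simp
    rw [sum_two_pow] at h1
    have : 0 < 2 ^ h := Nat.pow_pos (by norm_num)
    omega
  -- key monotonicity
  have hkey : ∀ a b : Fin (2 ^ h + 1), a < b → g (s a) < g (s b) := by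
    intro a b hab
    set x := s a with hx
    set y := s b with hy
    have hxy : x < y := hs hab
    have hyx : y ^^^ c < x ^^^ c := hanti a b hab
    have hne : x ^^^ y ≠ 0 := by
      intro h0
      exact absurd ((Nat.eq_of_testBit_eq fun i => by simpa [Nat.testBit_xor] using congrArg (Nat.testBit · i) h0)) (Nat.ne_of_lt hxy)
    obtain ⟨M, hM, hMhigh⟩ := Nat.exists_most_significant_bit hne
    have hhigh : ∀ j, M < j → x.testBit j = y.testBit j := by
      intro j hj
      have h' := hMhigh j hj
      rw [Nat.testBit_xor] at h'
      revert h'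
      cases x.testBit j <;> cases y.testBit j <;> simp
    rw [Nat.testBit_xor] at hM
    have hxM : x.testBit M = false ∧ y.testBit M = true := by
      cases hxb : x.testBit M <;> cases hyb : y.testBit M
      · rw [hxb, hyb] at hM; simp at hM
      · exact ⟨rfl, rfl⟩
      · exfalso
        have : y < x := Nat.lt_of_testBit M hyb hxb (fun j hj => (hhigh j hj).symm)
        omega
      · rw [hxb, hyb] at hM; simp at hM
    -- c has bit M set
    have hcM : c.testBit M = true := by
      by_contra hcM
      have hcM' : c.testBit M = false := Bool.eq_false_iff.mpr hcM
      have hlt' : x ^^^ c < y ^^^ c := by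
        apply Nat.lt_of_testBit M
        · rw [Nat.testBit_xor, hxM.1, hcM']; rfl
        · rw [Nat.testBit_xor, hxM.2, hcM']; rfl
        · intro j hj
          rw [Nat.testBit_xor, Nat.testBit_xor, hhigh j hj]
      omega
    rw [hcbit] at hcM
    obtain ⟨j0, hj0h, hj0⟩ := of_decide_eq_true hcM
    -- split sums
    have hιgt : ∀ j, j0 < j → j < h → M < ι j := by
      intro j hj hjh
      rw [← hj0]; exact hmono j0 j hj hjh
    have hιlt : ∀ j, j < j0 → ι j < M := by
      intro j hj
      rw [← hj0]; exact hmono j j0 hj hj0h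
    have hj0h' : j0 + 1 ≤ h := hj0h
    have hsplit : ∀ z : ℕ, g z = (∑ j ∈ Finset.range (j0 + 1), if z.testBit (ι j) then 2 ^ j else 0)
        + ∑ j ∈ Finset.Ico (j0 + 1) h, if z.testBit (ι j) then 2 ^ j else 0 := by
      intro z
      rw [hgdef]
      exact (Finset.sum_range_add_sum_Ico _ hj0h').symm
    have hSeq : (∑ j ∈ Finset.Ico (j0 + 1) h, if x.testBit (ι j) then 2 ^ j else 0)
        = ∑ j ∈ Finset.Ico (j0 + 1) h, if y.testBit (ι j) then 2 ^ j else 0 := by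
      apply Finset.sum_congr rfl
      intro j hj
      rw [Finset.mem_Ico] at hj
      rw [hhigh (ι j) (hιgt j (by omega) hj.2)]
    have hxlow : (∑ j ∈ Finset.range (j0 + 1), if x.testBit (ι j) then 2 ^ j else 0)
        ≤ 2 ^ j0 - 1 := by
      rw [Finset.sum_range_succ, hj0, hxM.1]
      simp only [if_neg (Bool.false_ne_true), add_zero]
      calc (∑ j ∈ Finset.range j0, if x.testBit (ι j) then 2 ^ j else 0)
          ≤ ∑ j ∈ Finset.range j0, 2 ^ j := by
            apply Finset.sum_le_sum; intro j _; split <;> simp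
        _ = 2 ^ j0 - 1 := sum_two_pow j0
    have hylow : 2 ^ j0 ≤ ∑ j ∈ Finset.range (j0 + 1), if y.testBit (ι j) then 2 ^ j else 0 := by
      rw [Finset.sum_range_succ, hj0, hxM.2]
      simp
    have hpos : 0 < 2 ^ j0 := Nat.pow_pos (by norm_num)
    rw [hsplit x, hsplit y, hSeq]
    omega
  -- pigeonhole
  set t : Fin (2 ^ h + 1) → Fin (2 ^ h) := fun j => ⟨g (s j), hgbound (s j)⟩ with htdef
  have htmono : StrictMono t := by
    intro a b hab
    exact Fin.mk_lt_mk.mpr (hkey a b hab)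
  have hcard := Fintype.card_le_of_injective t htmono.injective
  simp only [Fintype.card_fin] at hcard
  omega
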